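/- If a GO space X has a dense subspace Y that is linearly Lindelöf (in the subspace topology), then X is Lindelöf. That is, if X is a topological space that embeds homeomorphically into a linearly ordered set L equipped with its order topology, and X has a dense linearly Lindelöf subspace, then X is Lindelöf. -/

import Mathlib

open Set Topology Cardinal

universe u

/-- A space is linearly Lindelöf if every open cover which is a chain under
inclusion has a countable subcover. -/
def LinearlyLindelof (X : Type u) [TopologicalSpace X] : Prop :=
  ∀ 𝒰 : Set (Set X), (∀ U ∈ 𝒰, IsOpen U) → ⋃₀ 𝒰 = Set.univ →
    IsChain (· ⊆ ·) 𝒰 → ∃ 𝒱 ⊆ 𝒰, 𝒱.Countable ∧ ⋃₀ 𝒱 = Set.univ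

section Aux

variable {X : Type u} [TopologicalSpace X]

/-- From linear Lindelöfness of a dense subspace, extract a countable family that is
"cofinal" with respect to an abstract strict order relation `lt`. -/
lemma aux_cofinal (Y : Set X) (hdense : Dense Y) (hY : LinearlyLindelof Y)
    (lt : X → X → Prop) (htrans : ∀ {a b c}, lt a b → lt b c → lt a c)
    (hirr : ∀ a, ¬ lt a a)
    (hopen1 : ∀ d, IsOpen {z | lt z d}) (hopen2 : ∀ d, IsOpen {z | lt d z})
    (E D : Set X) (hEo : IsOpen E) (hEc : IsOpen Eᶜ) (hDE : D ⊆ E)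
    (hDtotal : ∀ a ∈ D, ∀ b ∈ D, lt a b ∨ a = b ∨ lt b a)
    (hcov : ∀ z ∈ E, ∃ d ∈ D, lt z d) :
    ∃ T ⊆ D, T.Countable ∧ ∀ d ∈ D, ∃ t ∈ T, ¬ lt t d := by
  rcases D.eq_empty_or_nonempty with rfl | ⟨d₀, hd₀⟩
  · exact ⟨∅, Subset.rfl, countable_empty, by simp⟩
  set G : X → Set X := fun d => {z | lt z d} ∪ Eᶜ with hG
  have hGopen : ∀ d, IsOpen (G d) := fun d => (hopen1 d).union hEc
  have hmono : ∀ a ∈ D, ∀ b ∈ D, ¬ lt b a → G a ⊆ G b := by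
    intro a ha b hb hab z hz
    rcases hz with hz | hz
    · rcases hDtotal a ha b hb with h | h | h
      · exact Or.inl (htrans hz h)
      · exact Or.inl (h ▸ hz)
      · exact absurd h hab
    · exact Or.inr hz
  set 𝒰 : Set (Set Y) := (fun d => (Subtype.val : Y → X) ⁻¹' G d) '' D with h𝒰
  have hUopen : ∀ U ∈ 𝒰, IsOpen U := by
    rintro _ ⟨d, hd, rfl⟩
    exact (hGopen d).preimage continuous_subtype_val
  have hUcov : ⋃₀ 𝒰 = Set.univ := by
    apply eq_univ_of_forall
    intro z
    by_cases hzE : (z : X) ∈ E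
    · obtain ⟨d, hd, hzd⟩ := hcov z hzE
      exact ⟨_, ⟨d, hd, rfl⟩, Or.inl hzd⟩
    · exact ⟨_, ⟨d₀, hd₀, rfl⟩, Or.inr hzE⟩
  have hUchain : IsChain (· ⊆ ·) 𝒰 := by
    rintro _ ⟨a, ha, rfl⟩ _ ⟨b, hb, rfl⟩ hne
    rcases hDtotal a ha b hb with h | h | h
    · exact Or.inl (preimage_mono (hmono a ha b hb (fun h' => hirr b (htrans h' h))))
    · exact absurd (by rw [h]) hne
    · exact Or.inr (preimage_mono (hmono b hb a ha (fun h' => hirr a (htrans h' h))))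
  obtain ⟨𝒱, h𝒱sub, h𝒱count, h𝒱cov⟩ := hY 𝒰 hUopen hUcov hUchain
  have hpick : ∀ V ∈ 𝒱, ∃ d, d ∈ D ∧ V = Subtype.val ⁻¹' G d := by
    intro V hV
    rcases h𝒱sub hV with ⟨d, hd, hVd⟩
    exact ⟨d, hd, hVd.symm⟩
  have : Nonempty X := ⟨d₀⟩
  choose! g hgD hgV using hpick
  refine ⟨g '' 𝒱, ?_, ?_, ?_⟩
  · rintro _ ⟨V, hV, rfl⟩; exact hgD V hV
  · exact h𝒱count.image g
  · intro d hd
    by_contra hcon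
    push_neg at hcon
    obtain ⟨c, hc, hbc⟩ := hcov d (hDE hd)
    have hNopen : IsOpen ({z | lt d z} ∩ E) := (hopen2 d).inter hEo
    obtain ⟨y, hyY, hydy, hyE⟩ := hdense.exists_mem_open hNopen ⟨c, hbc, hDE hc⟩
    have hyV : (⟨y, hyY⟩ : Y) ∈ ⋃₀ 𝒱 := h𝒱cov ▸ mem_univ _
    rcases hyV with ⟨V, hV, hyV⟩
    rw [hgV V hV] at hyV
    rcases hyV with hylt | hyEc
    · have h1 : lt (g V) d := hcon (g V) ⟨V, hV, rfl⟩
      exact hirr y (htrans (htrans (show lt y (g V) from hylt) h1) (show lt d y from hydy))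
    · exact hyEc hyE

/-- A disjoint family of nonempty open sets covering a space with a dense
linearly Lindelöf subspace is countable. -/
lemma aux_disjoint (Y : Set X) (hdense : Dense Y) (hY : LinearlyLindelof Y)
    (Q : Set (Set X)) (hQo : ∀ q ∈ Q, IsOpen q) (hQne : ∀ q ∈ Q, q.Nonempty)
    (hQdisj : ∀ q ∈ Q, ∀ q' ∈ Q, (q ∩ q').Nonempty → q = q')
    (hQcov : ∀ x : X, ∃ q ∈ Q, x ∈ q) : Q.Countable := by
  by_contra hQc
  have h0 : ℵ₀ < #Q :=
    lt_of_not_ge fun h => hQc (le_aleph0_iff_set_countable.mp h)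
  have h1 : ℵ₁ ≤ #Q := by
    rw [← Cardinal.succ_aleph0]
    exact Order.succ_le_of_lt h0
  obtain ⟨S, hSQ, hS⟩ := Cardinal.le_mk_iff_exists_subset.mp h1
  set O := (Cardinal.aleph 1).ord.ToType with hO
  have hOcard : #O = ℵ₁ := Cardinal.mk_ord_toType _
  obtain ⟨φ⟩ : Nonempty (O ≃ S) := Cardinal.eq.mp (hOcard.trans hS.symm)
  have hOne : Nonempty O := by
    rw [← Cardinal.mk_ne_zero_iff, hOcard]
    exact (aleph0_pos.trans aleph0_lt_aleph_one).ne'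
  obtain ⟨a₀⟩ := hOne
  have hIic : ∀ a : O, {b : O | b ≤ a}.Countable := by
    intro a
    have h2 : {b : O | b ≤ a} ⊆ {b : O | b < a} ∪ {a} := by
      intro b hb
      rcases lt_or_eq_of_le (show b ≤ a from hb) with h | h
      · exact Or.inl h
      · exact Or.inr h
    refine Countable.mono h2 (Countable.union ?_ (countable_singleton a))
    have h3 : #(Iio a) < ℵ₁ := Cardinal.mk_Iio_ord_toType a
    exact (countable_iff_lt_aleph_one _).mpr h3
  set W : O → Set X := fun a => (⋃ b ∈ {b : O | b ≤ a}, ((φ b : Set X))) ∪ ⋃₀ (Q \ S)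
    with hW
  have hWopen : ∀ a, IsOpen (W a) := by
    intro a
    refine IsOpen.union (isOpen_biUnion fun b _ => hQo _ (hSQ (φ b).2)) ?_
    exact isOpen_sUnion fun q hq => hQo q hq.1
  have hWmono : ∀ a b : O, a ≤ b → W a ⊆ W b := by
    intro a b hab
    refine union_subset_union ?_ Subset.rfl
    exact biUnion_subset_biUnion_left (fun c hc => le_trans hc hab)
  have hWmem : ∀ (x : X), ∀ a : O, x ∈ W a ↔
      ((∃ b ≤ a, x ∈ (φ b : Set X)) ∨ x ∈ ⋃₀ (Q \ S)) := by
    intro x a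
    simp [hW]
  set 𝒰 : Set (Set Y) := (fun a => (Subtype.val : Y → X) ⁻¹' W a) '' Set.univ with h𝒰
  have hUopen : ∀ U ∈ 𝒰, IsOpen U := by
    rintro _ ⟨a, _, rfl⟩
    exact (hWopen a).preimage continuous_subtype_val
  have hUcov : ⋃₀ 𝒰 = Set.univ := by
    apply eq_univ_of_forall
    intro z
    obtain ⟨q, hqQ, hzq⟩ := hQcov (z : X)
    by_cases hqS : q ∈ S
    · refine ⟨_, ⟨φ.symm ⟨q, hqS⟩, mem_univ _, rfl⟩, ?_⟩
      rw [mem_preimage, hWmem]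
      refine Or.inl ⟨φ.symm ⟨q, hqS⟩, le_refl _, ?_⟩
      rw [Equiv.apply_symm_apply]
      exact hzq
    · refine ⟨_, ⟨a₀, mem_univ _, rfl⟩, ?_⟩
      rw [mem_preimage, hWmem]
      exact Or.inr ⟨q, ⟨hqQ, hqS⟩, hzq⟩
  have hUchain : IsChain (· ⊆ ·) 𝒰 := by
    rintro _ ⟨a, _, rfl⟩ _ ⟨b, _, rfl⟩ _
    rcases le_total a b with h | h
    · exact Or.inl (preimage_mono (hWmono a b h))
    · exact Or.inr (preimage_mono (hWmono b a h))
  obtain ⟨𝒱, h𝒱sub, h𝒱count, h𝒱cov⟩ := hY 𝒰 hUopen hUcov hUchain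
  have hpick : ∀ V ∈ 𝒱, ∃ a : O, V = Subtype.val ⁻¹' W a := by
    intro V hV
    rcases h𝒱sub hV with ⟨a, _, hVa⟩
    exact ⟨a, hVa.symm⟩
  haveI : Nonempty O := ⟨a₀⟩
  choose! g hgV using hpick
  set A : Set O := g '' 𝒱 with hA
  have hAcount : A.Countable := h𝒱count.image g
  -- every element of S is indexed by some `b` below an element of `A`
  have hmain : ∀ s : S, ∃ a ∈ A, φ.symm s ≤ a := by
    rintro ⟨q, hqS⟩
    obtain ⟨y, hyY, hyq⟩ :=
      hdense.exists_mem_open (hQo q (hSQ hqS)) (hQne q (hSQ hqS))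
    have hyV : (⟨y, hyY⟩ : Y) ∈ ⋃₀ 𝒱 := h𝒱cov ▸ mem_univ _
    rcases hyV with ⟨V, hV, hyV⟩
    rw [hgV V hV, mem_preimage, hWmem] at hyV
    rcases hyV with ⟨b, hba, hyb⟩ | ⟨q', hq'QS, hyq'⟩
    · have hqb : q = ((φ b : Set X)) :=
        hQdisj q (hSQ hqS) _ (hSQ (φ b).2) ⟨y, hyq, hyb⟩
      have : φ.symm ⟨q, hqS⟩ = b := by
        have : (⟨q, hqS⟩ : S) = φ b := Subtype.ext hqb
        rw [this, Equiv.symm_apply_apply]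
      exact ⟨g V, ⟨V, hV, rfl⟩, this ▸ hba⟩
    · exfalso
      have := hQdisj q (hSQ hqS) q' hq'QS.1 ⟨y, hyq, hyq'⟩
      exact hq'QS.2 (this ▸ hqS)
  -- hence S is countable, contradiction
  have hScount : (Set.univ : Set S).Countable := by
    have hsub : (Set.univ : Set S) ⊆
        ⋃ a ∈ A, (fun s : S => φ.symm s) ⁻¹' {b : O | b ≤ a} := by
      intro s _
      obtain ⟨a, haA, hsa⟩ := hmain s
      exact mem_biUnion haA hsa
    refine Countable.mono hsub ?_
    exact Countable.biUnion hAcount fun a _ =>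
      (hIic a).preimage (Equiv.injective _)
  have : #S ≤ ℵ₀ := by
    rw [Cardinal.mk_le_aleph0_iff, ← Set.countable_univ_iff]
    exact hScount
  rw [hS] at this
  exact absurd this (not_le.mpr aleph0_lt_aleph_one)

end Aux

/-- In an order topology, every open set is a neighborhood of each of its points
through an open order-connected set. -/
lemma aux_basis {L : Type u} [LinearOrder L] [TopologicalSpace L] [OrderTopology L]
    {s : Set L} (hs : IsOpen s) {x : L} (hx : x ∈ s) :
    ∃ c, IsOpen c ∧ c.OrdConnected ∧ x ∈ c ∧ c ⊆ s := by
  have heq := OrderTopology.topology_eq_generate_intervals (α := L)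
  set G : Set (Set L) := { t | ∃ a, t = Ioi a ∨ t = Iio a } with hG
  have hs' : TopologicalSpace.GenerateOpen G s := by rw [heq] at hs; exact hs
  have key : ∀ t, TopologicalSpace.GenerateOpen G t →
      ∀ y ∈ t, ∃ c, TopologicalSpace.GenerateOpen G c ∧
        c.OrdConnected ∧ y ∈ c ∧ c ⊆ t := by
    intro t ht
    induction ht with
    | basic u hu =>
        intro y hy
        refine ⟨u, TopologicalSpace.GenerateOpen.basic u hu, ?_, hy, Subset.rfl⟩
        rcases hu with ⟨a, rfl | rfl⟩
        · exact ordConnected_Ioi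
        · exact ordConnected_Iio
    | univ =>
        intro y _
        exact ⟨univ, TopologicalSpace.GenerateOpen.univ, ordConnected_univ,
          mem_univ y, Subset.rfl⟩
    | inter u v _ _ ihu ihv =>
        intro y hy
        obtain ⟨c₁, hc₁, hcc₁, hyc₁, hcu⟩ := ihu y hy.1
        obtain ⟨c₂, hc₂, hcc₂, hyc₂, hcv⟩ := ihv y hy.2
        exact ⟨c₁ ∩ c₂, TopologicalSpace.GenerateOpen.inter _ _ hc₁ hc₂,
          hcc₁.inter hcc₂, ⟨hyc₁, hyc₂⟩, inter_subset_inter hcu hcv⟩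
    | sUnion SS _ ih =>
        intro y hy
        obtain ⟨u, huSS, hyu⟩ := hy
        obtain ⟨c, hc, hcc, hyc, hcu⟩ := ih u huSS y hyu
        exact ⟨c, hc, hcc, hyc, hcu.trans (subset_sUnion_of_mem huSS)⟩
  obtain ⟨c, hc, hcc, hxc, hcs⟩ := key s hs' x hx
  refine ⟨c, ?_, hcc, hxc, hcs⟩
  rw [heq]
  exact hc

/-- A GO space (a space embedding into a linear order with its order topology)
with a dense linearly Lindelöf subspace is Lindelöf. -/
theorem GO_dense_linearlyLindelof_isLindelof
    (X : Type u) [TopologicalSpace X] (L : Type u) [LinearOrder L]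
    [TopologicalSpace L] [OrderTopology L] (e : X → L) (he : IsEmbedding e)
    (Y : Set X) (hdense : Dense Y) (hY : LinearlyLindelof Y) :
    LindelofSpace X := by
  letI : LinearOrder X := LinearOrder.lift' e he.injective
  have hopen_lt : ∀ d : X, IsOpen {z : X | z < d} := by
    intro d
    have h : {z : X | z < d} = e ⁻¹' Iio (e d) := rfl
    rw [h]; exact isOpen_Iio.preimage he.continuous
  have hopen_gt : ∀ d : X, IsOpen {z : X | d < z} := by
    intro d
    have h : {z : X | d < z} = e ⁻¹' Ioi (e d) := rfl
    rw [h]; exact isOpen_Ioi.preimage he.continuous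
  constructor
  rw [isLindelof_iff_countable_subcover]
  intro ι U hUo hsU
  classical
  -- the family of open convex refinements of the cover
  set 𝒞 : Set (Set L) := {c | IsOpen c ∧ c.OrdConnected ∧ ∃ i : ι, e ⁻¹' c ⊆ U i} with h𝒞
  have h𝒞cov : ∀ x : X, ∃ c ∈ 𝒞, e x ∈ c := by
    intro x
    rcases mem_iUnion.mp (hsU (mem_univ x)) with ⟨i, hxi⟩
    obtain ⟨t, ht, hpre⟩ := he.toIsInducing.isOpen_iff.mp (hUo i)
    have hxt : e x ∈ t := by rw [← hpre] at hxi; exact hxi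
    obtain ⟨c, hco, hcc, hxc, hct⟩ := aux_basis ht hxt
    exact ⟨c, ⟨hco, hcc, i, hpre ▸ preimage_mono hct⟩, hxc⟩
  -- the "countably covered" predicate
  set cov : Set X → Prop := fun s => ∃ 𝒟 ⊆ 𝒞, 𝒟.Countable ∧ s ⊆ e ⁻¹' ⋃₀ 𝒟 with hcovdef
  have cov_mono : ∀ {s s' : Set X}, s ⊆ s' → cov s' → cov s := by
    rintro s s' hss ⟨𝒟, h1, h2, h3⟩; exact ⟨𝒟, h1, h2, hss.trans h3⟩
  have cov_union : ∀ {s s' : Set X}, cov s → cov s' → cov (s ∪ s') := by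
    rintro s s' ⟨𝒟, h1, h2, h3⟩ ⟨𝒟', h1', h2', h3'⟩
    refine ⟨𝒟 ∪ 𝒟', union_subset h1 h1', h2.union h2', ?_⟩
    rw [sUnion_union, preimage_union]
    exact union_subset (h3.trans (subset_union_left))
      (h3'.trans (subset_union_right))
  have cov_single : ∀ c ∈ 𝒞, cov (e ⁻¹' c) := fun c hc =>
    ⟨{c}, singleton_subset_iff.mpr hc, countable_singleton c,
      by rw [sUnion_singleton]⟩
  have cov_biUnion : ∀ (T : Set X) (f : X → Set X), T.Countable →
      (∀ t ∈ T, cov (f t)) → cov (⋃ t ∈ T, f t) := by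
    intro T f hTc hf
    have hne : Nonempty (Set L) := ⟨∅⟩
    choose! g hg1 hg2 hg3 using hf
    refine ⟨⋃ t ∈ T, g t, iUnion₂_subset hg1,
      hTc.biUnion (fun t ht => hg2 t ht), ?_⟩
    intro x hx
    rcases mem_iUnion₂.mp hx with ⟨t, ht, hxt⟩
    rcases mem_sUnion.mp (mem_preimage.mp (hg3 t ht hxt)) with ⟨c, hc, hxc⟩
    exact mem_preimage.mpr (mem_sUnion.mpr ⟨c, mem_biUnion ht hc, hxc⟩)
  have cov_sUnion : ∀ (QQ : Set (Set X)), QQ.Countable →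
      (∀ q ∈ QQ, cov q) → cov (⋃₀ QQ) := by
    intro QQ hQQc hf
    have hne : Nonempty (Set L) := ⟨∅⟩
    choose! g hg1 hg2 hg3 using hf
    refine ⟨⋃ q ∈ QQ, g q, iUnion₂_subset hg1,
      hQQc.biUnion (fun q hq => hg2 q hq), ?_⟩
    intro x hx
    rcases hx with ⟨q, hq, hxq⟩
    rcases mem_sUnion.mp (mem_preimage.mp (hg3 q hq hxq)) with ⟨c, hc, hxc⟩
    exact mem_preimage.mpr (mem_sUnion.mpr ⟨c, mem_biUnion hq hc, hxc⟩)
  -- the equivalence relation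
  set r : X → X → Prop := fun x y => cov (uIcc x y) with hr
  have hrefl : ∀ x, r x x := by
    intro x
    obtain ⟨c, hc, hxc⟩ := h𝒞cov x
    refine cov_mono ?_ (cov_single c hc)
    rw [uIcc_self]
    exact singleton_subset_iff.mpr hxc
  have hsymm : ∀ {x y}, r x y → r y x := by
    intro x y h
    show cov (uIcc y x)
    rw [uIcc_comm]; exact h
  have htrans : ∀ {x y z}, r x y → r y z → r x z := by
    intro x y z h1 h2
    exact cov_mono uIcc_subset_uIcc_union_uIcc (cov_union h1 h2)
  have hconv : ∀ c ∈ 𝒞, ∀ y z : X, e y ∈ c → e z ∈ c → uIcc y z ⊆ e ⁻¹' c := by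
    intro c hc y z hy hz
    rcases le_total y z with h | h
    · rw [uIcc_of_le (a := y) (b := z) h]
      intro w hw
      exact hc.2.1.out hy hz ⟨hw.1, hw.2⟩
    · rw [uIcc_comm, uIcc_of_le (a := z) (b := y) h]
      intro w hw
      exact hc.2.1.out hz hy ⟨hw.1, hw.2⟩
  -- the classes
  set E : X → Set X := fun x => {y | r x y} with hE
  have hmemE : ∀ x, x ∈ E x := fun x => hrefl x
  have hEopen : ∀ x, IsOpen (E x) := by
    intro x
    rw [isOpen_iff_forall_mem_open]
    intro y hy
    obtain ⟨c, hc, hyc⟩ := h𝒞cov y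
    refine ⟨e ⁻¹' c, ?_, hc.1.preimage he.continuous, hyc⟩
    intro z hz
    exact htrans hy (cov_mono (hconv c hc y z hyc hz) (cov_single c hc))
  have hEcopen : ∀ x, IsOpen (E x)ᶜ := by
    intro x
    rw [isOpen_iff_forall_mem_open]
    intro y hy
    obtain ⟨c, hc, hyc⟩ := h𝒞cov y
    refine ⟨e ⁻¹' c, ?_, hc.1.preimage he.continuous, hyc⟩
    intro z hz hzE
    exact hy (htrans hzE (cov_mono (hconv c hc z y hz hyc) (cov_single c hc)))
  have hEdisj : ∀ x x' : X, ((E x) ∩ (E x')).Nonempty → E x = E x' := by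
    rintro x x' ⟨z, hzx, hzx'⟩
    ext w
    constructor
    · intro hw; exact htrans (htrans hzx' (hsymm hzx)) hw
    · intro hw; exact htrans (htrans hzx (hsymm hzx')) hw
  -- each class is countably covered
  have hcovE : ∀ x₀ : X, cov (E x₀) := by
    intro x₀
    have hsplit : E x₀ ⊆ (E x₀ ∩ {z | x₀ ≤ z}) ∪ (E x₀ ∩ {z | z ≤ x₀}) := by
      intro z hz; rcases le_total x₀ z with h | h
      · exact Or.inl ⟨hz, h⟩
      · exact Or.inr ⟨hz, h⟩
    refine cov_mono hsplit (cov_union ?_ ?_)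
    · -- the part above x₀
      set D := E x₀ ∩ {z | x₀ ≤ z} with hD
      by_cases hmax : ∃ m ∈ D, ∀ d ∈ D, ¬ m < d
      · obtain ⟨m, hmD, hm⟩ := hmax
        have hsub : D ⊆ uIcc x₀ m := by
          intro d hd
          rw [uIcc_of_le (a := x₀) (b := m) hmD.2]
          exact ⟨hd.2, not_lt.mp (hm d hd)⟩
        exact cov_mono hsub hmD.1
      · push_neg at hmax
        obtain ⟨T, hTD, hTc, hTcof⟩ := aux_cofinal Y hdense hY (· < ·)
          (fun h1 h2 => lt_trans h1 h2) (fun a => lt_irrefl a) hopen_lt hopen_gt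
          (E x₀) D (hEopen x₀) (hEcopen x₀) inter_subset_left
          (fun a _ b _ => lt_trichotomy a b)
          (by
            intro z hz
            rcases lt_or_ge z x₀ with h | h
            · exact ⟨x₀, ⟨hmemE x₀, le_refl x₀⟩, h⟩
            · exact hmax z ⟨hz, h⟩)
        have hsub : D ⊆ ⋃ t ∈ T, uIcc x₀ t := by
          intro d hd
          obtain ⟨t, htT, htd⟩ := hTcof d hd
          refine mem_biUnion htT ?_
          rw [uIcc_of_le (a := x₀) (b := t) (hTD htT).2]
          exact ⟨hd.2, not_lt.mp htd⟩
        exact cov_mono hsub (cov_biUnion T _ hTc fun t ht => (hTD ht).1)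
    · -- the part below x₀
      set D := E x₀ ∩ {z | z ≤ x₀} with hD
      by_cases hmax : ∃ m ∈ D, ∀ d ∈ D, ¬ d < m
      · obtain ⟨m, hmD, hm⟩ := hmax
        have hsub : D ⊆ uIcc x₀ m := by
          intro d hd
          rw [uIcc_comm, uIcc_of_le (a := m) (b := x₀) hmD.2]
          exact ⟨not_lt.mp (hm d hd), hd.2⟩
        exact cov_mono hsub hmD.1
      · push_neg at hmax
        obtain ⟨T, hTD, hTc, hTcof⟩ := aux_cofinal Y hdense hY (fun a b => b < a)
          (fun h1 h2 => lt_trans h2 h1) (fun a => lt_irrefl a) hopen_gt hopen_lt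
          (E x₀) D (hEopen x₀) (hEcopen x₀) inter_subset_left
          (fun a _ b _ => by
            rcases lt_trichotomy a b with h | h | h
            · exact Or.inr (Or.inr h)
            · exact Or.inr (Or.inl h)
            · exact Or.inl h)
          (by
            intro z hz
            rcases lt_or_ge x₀ z with h | h
            · exact ⟨x₀, ⟨hmemE x₀, le_refl x₀⟩, h⟩
            · exact hmax z ⟨hz, h⟩)
        have hsub : D ⊆ ⋃ t ∈ T, uIcc x₀ t := by
          intro d hd
          obtain ⟨t, htT, htd⟩ := hTcof d hd
          refine mem_biUnion htT ?_
          rw [uIcc_comm, uIcc_of_le (a := t) (b := x₀) (hTD htT).2]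
          exact ⟨not_lt.mp htd, hd.2⟩
        exact cov_mono hsub (cov_biUnion T _ hTc fun t ht => (hTD ht).1)
  -- there are countably many classes
  set Q : Set (Set X) := Set.range E with hQ
  have hQcount : Q.Countable := by
    apply aux_disjoint Y hdense hY Q
    · rintro _ ⟨x, rfl⟩; exact hEopen x
    · rintro _ ⟨x, rfl⟩; exact ⟨x, hmemE x⟩
    · rintro _ ⟨x, rfl⟩ _ ⟨x', rfl⟩ hne; exact hEdisj x x' hne
    · intro x; exact ⟨E x, ⟨x, rfl⟩, hmemE x⟩
  -- the whole space is countably covered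
  have hcovuniv : cov univ := by
    have huniv : (univ : Set X) ⊆ ⋃₀ Q := fun x _ => ⟨E x, ⟨x, rfl⟩, hmemE x⟩
    refine cov_mono huniv (cov_sUnion Q hQcount ?_)
    rintro _ ⟨x, rfl⟩; exact hcovE x
  obtain ⟨𝒟, h𝒟sub, h𝒟c, h𝒟cov⟩ := hcovuniv
  have hpick : ∀ c : 𝒟, ∃ i : ι, e ⁻¹' (c : Set L) ⊆ U i :=
    fun c => (h𝒟sub c.2).2.2
  choose g hg using hpick
  haveI : Countable 𝒟 := h𝒟c.to_subtype
  refine ⟨Set.range g, countable_range g, ?_⟩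
  intro x _
  rcases mem_sUnion.mp (mem_preimage.mp (h𝒟cov (mem_univ x))) with ⟨c, hc, hxc⟩
  exact mem_iUnion₂.mpr ⟨g ⟨c, hc⟩, ⟨⟨c, hc⟩, rfl⟩, hg ⟨c, hc⟩ hxc⟩
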